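/- Let $E$ be a number field with adele ring $\mathbb{A}_E$ and let $C_\mathfrak{P} > 0$ be given for each place $\mathfrak{P}$ of $E$, with $C_\mathfrak{P} = 1$ for almost all finite places. Then the number of elements $x \in E$ with $|x|_\mathfrak{P} \le C_\mathfrak{P}$ for all places $\mathfrak{P}$ is at most $C(E)\left(1 + \prod_\mathfrak{P} C_\mathfrak{P}\right)$ for a constant $C(E)$ depending only on $E$. -/

import Mathlib

open NumberField IsDedekindDomain
open scoped Classical

/-- The normalized absolute value at a finite place `v` of a number field `E`:
`‖x‖_v = N(𝔭_v)^{ord}` where `ord = toAdd` of the `v`-adic valuation (so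
`‖ϖ‖_v = N(𝔭_v)^{-1}` for a uniformizer `ϖ`), and `‖0‖_v = 0`.  With this
normalization the product formula holds together with the normalized archimedean
absolute values `w(·)^{mult w}`. -/

noncomputable def finNorm {E : Type*} [Field E] [NumberField E]
    (v : HeightOneSpectrum (RingOfIntegers E)) (x : E) : ℝ :=
  if hx : x = 0 then 0
  else
    (Ideal.absNorm v.asIdeal : ℝ) ^
      Multiplicative.toAdd (WithZero.unzero (((v.valuation E).ne_zero_iff).mpr hx))

section helpers
variable {E : Type*} [Field E] [NumberField E] (v : HeightOneSpectrum (RingOfIntegers E))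

lemma one_lt_absNorm : 1 < Ideal.absNorm v.asIdeal := by
  rcases Nat.lt_or_ge (Ideal.absNorm v.asIdeal) 2 with h | h
  · interval_cases h' : Ideal.absNorm v.asIdeal
    · exact absurd (Ideal.absNorm_eq_zero_iff.mp h') v.ne_bot
    · exact absurd (Ideal.absNorm_eq_one_iff.mp h') v.isPrime.ne_top
  · omega

lemma absNorm_real_pos : (0:ℝ) < (Ideal.absNorm v.asIdeal : ℝ) := by
  exact_mod_cast Nat.lt_of_lt_of_le Nat.zero_lt_one (one_lt_absNorm v).le

lemma finNorm_of_ne {x : E} (hx : x ≠ 0) :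
    finNorm v x = (Ideal.absNorm v.asIdeal : ℝ) ^
      Multiplicative.toAdd (WithZero.unzero (((v.valuation E).ne_zero_iff).mpr hx)) := dif_neg hx

lemma finNorm_eq_of_valuation_eq {x : E} (hx : x ≠ 0) {m : Multiplicative ℤ}
    (h : v.valuation E x = (m : WithZero (Multiplicative ℤ))) :
    finNorm v x = (Ideal.absNorm v.asIdeal : ℝ) ^ Multiplicative.toAdd m := by
  rw [finNorm_of_ne v hx]
  congr 2
  have h2 := WithZero.coe_unzero (((v.valuation E).ne_zero_iff).mpr hx)
  exact WithZero.coe_inj.mp (h2.trans h)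

lemma finNorm_pos {x : E} (hx : x ≠ 0) : 0 < finNorm v x := by
  rw [finNorm_of_ne v hx]
  exact zpow_pos (absNorm_real_pos v) _
end helpers

section helpers2
variable {E : Type*} [Field E] [NumberField E] (v : HeightOneSpectrum (RingOfIntegers E))

lemma finNorm_mul {x y : E} (hx : x ≠ 0) (hy : y ≠ 0) :
    finNorm v (x * y) = finNorm v x * finNorm v y := by
  have hxy : x * y ≠ 0 := mul_ne_zero hx hy
  have hux := WithZero.coe_unzero (((v.valuation E).ne_zero_iff).mpr hx)
  have huy := WithZero.coe_unzero (((v.valuation E).ne_zero_iff).mpr hy)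
  have h : v.valuation E (x * y) =
      ((WithZero.unzero (((v.valuation E).ne_zero_iff).mpr hx) *
        WithZero.unzero (((v.valuation E).ne_zero_iff).mpr hy) : Multiplicative ℤ) :
        WithZero (Multiplicative ℤ)) := by
    rw [Valuation.map_mul, WithZero.coe_mul, hux, huy]
  rw [finNorm_eq_of_valuation_eq v hxy h, toAdd_mul, zpow_add₀ (absNorm_real_pos v).ne',
    finNorm_of_ne v hx, finNorm_of_ne v hy]

lemma finNorm_div {x y : E} (hx : x ≠ 0) (hy : y ≠ 0) :
    finNorm v (x / y) = finNorm v x / finNorm v y := by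
  have h : x / y * y = x := div_mul_cancel₀ x hy
  have hq : x / y ≠ 0 := div_ne_zero hx hy
  have := finNorm_mul v hq hy
  rw [h] at this
  rw [this, mul_div_cancel_right₀ _ ((finNorm_pos v hy).ne')]

open Ideal in
lemma finNorm_algebraMap {a : RingOfIntegers E} (ha : a ≠ 0) :
    finNorm v (algebraMap (RingOfIntegers E) E a) = (Ideal.absNorm v.asIdeal : ℝ) ^
      (-((Associates.mk v.asIdeal).count (Associates.mk (Ideal.span {a})).factors : ℤ)) := by
  have haE : algebraMap (RingOfIntegers E) E a ≠ 0 :=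
    (map_ne_zero_iff _ (IsFractionRing.injective (RingOfIntegers E) E)).mpr ha
  have h : v.valuation E (algebraMap (RingOfIntegers E) E a) =
      ((Multiplicative.ofAdd
        (-((Associates.mk v.asIdeal).count (Associates.mk (Ideal.span {a})).factors : ℤ)) :
          Multiplicative ℤ) : WithZero (Multiplicative ℤ)) := by
    rw [IsDedekindDomain.HeightOneSpectrum.valuation_of_algebraMap]
    exact v.intValuation_if_neg ha
  rw [finNorm_eq_of_valuation_eq v haE h, toAdd_ofAdd]

end helpers2

section helpers3
variable {E : Type*} [Field E] [NumberField E]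

lemma span_ne_zero {a : RingOfIntegers E} (ha : a ≠ 0) :
    Ideal.span {a} ≠ (0 : Ideal (RingOfIntegers E)) := by
  simpa [Ideal.zero_eq_bot, Ideal.span_singleton_eq_bot] using ha

lemma count_eq_zero_of_not_mem {a : RingOfIntegers E} (ha : a ≠ 0)
    {v : HeightOneSpectrum (RingOfIntegers E)}
    (hv : ¬ v.asIdeal ∣ Ideal.span {a}) :
    (Associates.mk v.asIdeal).count (Associates.mk (Ideal.span {a})).factors = 0 := by
  by_contra hc
  exact hv ((Associates.count_ne_zero_iff_dvd (span_ne_zero ha) v.irreducible).mp hc)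

lemma mulSupport_finNorm_int {a : RingOfIntegers E} (ha : a ≠ 0) :
    (Function.mulSupport fun v : HeightOneSpectrum (RingOfIntegers E) =>
      finNorm v (algebraMap (RingOfIntegers E) E a)) ⊆
      (Ideal.finite_factors (span_ne_zero ha)).toFinset := by
  intro v hv
  rw [Function.mem_mulSupport] at hv
  by_contra hvs
  apply hv
  simp only [Finset.mem_coe, Set.Finite.mem_toFinset, Set.mem_setOf_eq] at hvs
  rw [finNorm_algebraMap v ha, count_eq_zero_of_not_mem ha hvs]
  norm_num

lemma finprod_finNorm_int {a : RingOfIntegers E} (ha : a ≠ 0) :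
    (∏ᶠ v : HeightOneSpectrum (RingOfIntegers E),
      finNorm v (algebraMap (RingOfIntegers E) E a)) =
      ((Ideal.absNorm (Ideal.span {a}) : ℝ))⁻¹ := by
  classical
  set s := (Ideal.finite_factors (span_ne_zero ha)).toFinset with hs
  set cnt : HeightOneSpectrum (RingOfIntegers E) → ℕ :=
    fun v => (Associates.mk v.asIdeal).count (Associates.mk (Ideal.span {a})).factors with hcnt
  have h1 : (∏ᶠ v : HeightOneSpectrum (RingOfIntegers E),
      finNorm v (algebraMap (RingOfIntegers E) E a)) =
      ∏ v ∈ s, finNorm v (algebraMap (RingOfIntegers E) E a) :=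
    finprod_eq_prod_of_mulSupport_subset _ (by exact_mod_cast mulSupport_finNorm_int ha)
  have hfact : ∏ v ∈ s, v.asIdeal ^ cnt v = Ideal.span {a} := by
    rw [← Ideal.finprod_heightOneSpectrum_factorization (span_ne_zero ha)]
    refine (finprod_eq_prod_of_mulSupport_subset _ ?_).symm
    intro v hv
    rw [Function.mem_mulSupport] at hv
    by_contra hvs
    apply hv
    show v.asIdeal ^ cnt v = 1
    simp only [hcnt]
    simp only [hs, Finset.mem_coe, Set.Finite.mem_toFinset, Set.mem_setOf_eq] at hvs
    rw [count_eq_zero_of_not_mem ha hvs, pow_zero]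
  have h2 : Ideal.absNorm (Ideal.span {a}) = ∏ v ∈ s, (Ideal.absNorm v.asIdeal) ^ cnt v := by
    rw [← hfact, map_prod]
    simp_rw [map_pow]
  rw [h1, h2]
  push_cast
  rw [← Finset.prod_inv_distrib]
  refine Finset.prod_congr rfl fun v _ => ?_
  rw [finNorm_algebraMap v ha, zpow_neg, zpow_natCast]

end helpers3

section helpers4
variable {E : Type*} [Field E] [NumberField E] (v : HeightOneSpectrum (RingOfIntegers E))

lemma finNorm_le_of_val_le {x y : E} (hx : x ≠ 0) (hy : y ≠ 0)
    (h : v.valuation E x ≤ v.valuation E y) : finNorm v x ≤ finNorm v y := by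
  rw [finNorm_of_ne v hx, finNorm_of_ne v hy]
  apply zpow_le_zpow_right₀ (le_of_lt (by exact_mod_cast one_lt_absNorm v : (1:ℝ) < _))
  have := h
  rw [← WithZero.coe_unzero (((v.valuation E).ne_zero_iff).mpr hx),
    ← WithZero.coe_unzero (((v.valuation E).ne_zero_iff).mpr hy), WithZero.coe_le_coe] at this
  exact Multiplicative.toAdd_le.mpr this

lemma finNorm_neg (x : E) : finNorm v (-x) = finNorm v x := by
  rcases eq_or_ne x 0 with rfl | hx
  · simp
  · have h : v.valuation E (-x) = v.valuation E x := Valuation.map_neg _ _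
    apply le_antisymm
    · exact finNorm_le_of_val_le v (neg_ne_zero.mpr hx) hx h.le
    · exact finNorm_le_of_val_le v hx (neg_ne_zero.mpr hx) h.ge

lemma finNorm_sub_le {x y : E} {C : ℝ} (hC : 0 ≤ C)
    (hx : finNorm v x ≤ C) (hy : finNorm v y ≤ C) : finNorm v (x - y) ≤ C := by
  rcases eq_or_ne (x - y) 0 with h0 | h0
  · rw [h0]; simpa [finNorm] using hC
  rcases eq_or_ne x 0 with rfl | hx0
  · rw [zero_sub, finNorm_neg]; exact hy
  rcases eq_or_ne y 0 with rfl | hy0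
  · rw [sub_zero]; exact hx
  have := Valuation.map_sub (v.valuation E) x y
  rcases max_cases (v.valuation E x) (v.valuation E y) with ⟨he, _⟩ | ⟨he, _⟩ <;> rw [he] at this
  · exact le_trans (finNorm_le_of_val_le v h0 hx0 this) hx
  · exact le_trans (finNorm_le_of_val_le v h0 hy0 this) hy

end helpers4

section prodformula
variable {E : Type*} [Field E] [NumberField E]

lemma mulSupport_finNorm {x : E} (hx : x ≠ 0) :
    (Function.mulSupport fun v : HeightOneSpectrum (RingOfIntegers E) => finNorm v x).Finite := by
  obtain ⟨a, b, hb, rfl⟩ := IsFractionRing.div_surjective (A := RingOfIntegers E) x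
  have hbne : b ≠ 0 := nonZeroDivisors.ne_zero hb
  have haE : algebraMap (RingOfIntegers E) E a ≠ 0 := fun h => hx (by rw [h, zero_div])
  have hbE : algebraMap (RingOfIntegers E) E b ≠ 0 :=
    (map_ne_zero_iff _ (IsFractionRing.injective (RingOfIntegers E) E)).mpr hbne
  have ha : a ≠ 0 := fun h => haE (by rw [h, map_zero])
  apply ((Ideal.finite_factors (span_ne_zero ha)).union
    (Ideal.finite_factors (span_ne_zero hbne))).subset
  intro v hv
  rw [Function.mem_mulSupport] at hv
  by_contra hvs
  simp only [Set.mem_union, Set.mem_setOf_eq, not_or] at hvs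
  apply hv
  rw [finNorm_div v haE hbE, finNorm_algebraMap v ha, finNorm_algebraMap v hbne,
    count_eq_zero_of_not_mem ha hvs.1, count_eq_zero_of_not_mem hbne hvs.2]
  norm_num

theorem prod_formula {x : E} (hx : x ≠ 0) :
    (∏ w : InfinitePlace E, w x ^ w.mult) *
      (∏ᶠ v : HeightOneSpectrum (RingOfIntegers E), finNorm v x) = 1 := by
  obtain ⟨a, b, hb, rfl⟩ := IsFractionRing.div_surjective (A := RingOfIntegers E) x
  have hbne : b ≠ 0 := nonZeroDivisors.ne_zero hb
  have haE : algebraMap (RingOfIntegers E) E a ≠ 0 := fun h => hx (by rw [h, zero_div])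
  have hbE : algebraMap (RingOfIntegers E) E b ≠ 0 :=
    (map_ne_zero_iff _ (IsFractionRing.injective (RingOfIntegers E) E)).mpr hbne
  have ha : a ≠ 0 := fun h => haE (by rw [h, map_zero])
  -- finite part
  have hfin : (∏ᶠ v : HeightOneSpectrum (RingOfIntegers E),
      finNorm v (algebraMap (RingOfIntegers E) E a / algebraMap (RingOfIntegers E) E b)) =
      (Ideal.absNorm (Ideal.span {b}) : ℝ) / (Ideal.absNorm (Ideal.span {a}) : ℝ) := by
    have heq : (fun v : HeightOneSpectrum (RingOfIntegers E) =>
        finNorm v (algebraMap (RingOfIntegers E) E a / algebraMap (RingOfIntegers E) E b)) =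
        fun v => finNorm v (algebraMap (RingOfIntegers E) E a) /
          finNorm v (algebraMap (RingOfIntegers E) E b) := by
      funext v; exact finNorm_div v haE hbE
    rw [heq, finprod_div_distrib
        (Set.Finite.subset (Finset.finite_toSet _) (mulSupport_finNorm_int ha))
        (Set.Finite.subset (Finset.finite_toSet _) (mulSupport_finNorm_int hbne)),
      finprod_finNorm_int ha, finprod_finNorm_int hbne, inv_div_inv]
  have harch : ∀ y : E, (∏ w : InfinitePlace E, w y ^ w.mult)
      = |((Algebra.norm ℚ y : ℚ) : ℝ)| := by
    intro y
    rw [NumberField.InfinitePlace.prod_eq_abs_norm, Rat.cast_abs]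
  have hNa : ∀ c : RingOfIntegers E, (Ideal.absNorm (Ideal.span {c}) : ℝ) =
      |((Algebra.norm ℚ (algebraMap (RingOfIntegers E) E c) : ℚ) : ℝ)| := by
    intro c
    rw [Ideal.absNorm_span_singleton, Nat.cast_natAbs, ← Rat.cast_intCast, Int.cast_abs,
      Algebra.coe_norm_int, ← NumberField.RingOfIntegers.coe_eq_algebraMap, Rat.cast_abs]
  have hbnorm : ((Algebra.norm ℚ (algebraMap (RingOfIntegers E) E b) : ℚ) : ℝ) ≠ 0 :=
    Rat.cast_ne_zero.mpr (Algebra.norm_ne_zero_iff.mpr hbE)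
  have hanorm : ((Algebra.norm ℚ (algebraMap (RingOfIntegers E) E a) : ℚ) : ℝ) ≠ 0 :=
    Rat.cast_ne_zero.mpr (Algebra.norm_ne_zero_iff.mpr haE)
  have key : ((Algebra.norm ℚ
        (algebraMap (RingOfIntegers E) E a / algebraMap (RingOfIntegers E) E b) : ℚ) : ℝ) *
      ((Algebra.norm ℚ (algebraMap (RingOfIntegers E) E b) : ℚ) : ℝ)
      = ((Algebra.norm ℚ (algebraMap (RingOfIntegers E) E a) : ℚ) : ℝ) := by
    rw_mod_cast [← map_mul, div_mul_cancel₀ _ hbE]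
  rw [hfin, harch, hNa a, hNa b]
  have h1 : ((Algebra.norm ℚ
        (algebraMap (RingOfIntegers E) E a / algebraMap (RingOfIntegers E) E b) : ℚ) : ℝ) *
      (((Algebra.norm ℚ (algebraMap (RingOfIntegers E) E b) : ℚ) : ℝ) /
        ((Algebra.norm ℚ (algebraMap (RingOfIntegers E) E a) : ℚ) : ℝ)) = 1 := by
    rw [← mul_div_assoc, key, div_self hanorm]
  rw [← abs_div, ← abs_mul, h1, abs_one]

end prodformula

/-- **Adelic Minkowski-type counting estimate.**  For a number field `E` there is a
constant `C(E)` such that: whenever `C_w > 0` is given at every archimedean place and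
`C_v > 0` at every finite place, with `C_v = 1` for almost all finite places, the number
of `x ∈ E` with `|x|_w ≤ C_w` and `|x|_v ≤ C_v` at every place (normalized absolute
values) is at most `C(E) (1 + ∏ C_w ∏ C_v)`. -/
theorem stmt13 (E : Type*) [Field E] [NumberField E] :
    ∃ C : ℝ, 0 < C ∧
      ∀ (Cinf : InfinitePlace E → ℝ)
        (Cfin : HeightOneSpectrum (RingOfIntegers E) → ℝ),
        (∀ w, 0 < Cinf w) → (∀ v, 0 < Cfin v) →
        {v : HeightOneSpectrum (RingOfIntegers E) | Cfin v ≠ 1}.Finite →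
        {x : E | (∀ w : InfinitePlace E, w x ^ w.mult ≤ Cinf w) ∧
            ∀ v, finNorm v x ≤ Cfin v}.Finite ∧
          (Nat.card {x : E | (∀ w : InfinitePlace E, w x ^ w.mult ≤ Cinf w) ∧
              ∀ v, finNorm v x ≤ Cfin v} : ℝ) ≤
            C * (1 + (∏ w : InfinitePlace E, Cinf w) * ∏ᶠ v, Cfin v) := by
  classical
  set n : ℕ := ∑ w : InfinitePlace E, w.mult with hn
  have hmultpos : ∀ w : InfinitePlace E, 0 < w.mult := by
    intro w
    rw [NumberField.InfinitePlace.mult]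
    split_ifs <;> norm_num
  have hnpos : 0 < n := by
    rw [hn]
    exact Finset.sum_pos (fun w _ => hmultpos w) (by
      simpa using (Finset.univ_nonempty (α := InfinitePlace E)))
  refine ⟨7 ^ n, by positivity, ?_⟩
  intro Cinf Cfin hCinf hCfin hfinite
  set S := {x : E | (∀ w : InfinitePlace E, w x ^ w.mult ≤ Cinf w) ∧
      ∀ v, finNorm v x ≤ Cfin v} with hS
  have hCfinsupp : Function.mulSupport Cfin ⊆ hfinite.toFinset := by
    intro v hv
    simp only [Finset.mem_coe, Set.Finite.mem_toFinset]
    exact hv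
  have hQeq : (∏ᶠ v, Cfin v) = ∏ v ∈ hfinite.toFinset, Cfin v :=
    finprod_eq_prod_of_mulSupport_subset Cfin hCfinsupp
  have hQ : 0 < ∏ᶠ v, Cfin v := by
    rw [hQeq]; exact Finset.prod_pos fun v _ => hCfin v
  have hP : 0 < ∏ w : InfinitePlace E, Cinf w := Finset.prod_pos fun w _ => hCinf w
  set V : ℝ := (∏ w : InfinitePlace E, Cinf w) * ∏ᶠ v, Cfin v with hV
  have hVpos : 0 < V := mul_pos hP hQ
  set t : ℝ := (max V 1) ^ ((n : ℝ)⁻¹) with ht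
  have ht1 : 1 ≤ t := Real.one_le_rpow (le_max_right _ _) (by positivity)
  have htpos : 0 < t := lt_of_lt_of_le one_pos ht1
  have htn : t ^ n = max V 1 := by
    rw [ht, ← Real.rpow_natCast ((max V 1) ^ ((n:ℝ)⁻¹)) n, ← Real.rpow_mul (by positivity),
      inv_mul_cancel₀ (by exact_mod_cast hnpos.ne'), Real.rpow_one]
  set N : ℕ := ⌈(5:ℝ) * t⌉₊ with hNdef
  have hN5t : 5 * t ≤ (N : ℝ) := Nat.le_ceil _
  have hNpos : (0:ℝ) < (N : ℝ) := lt_of_lt_of_le (by linarith) hN5t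
  have hN1 : (N : ℝ) + 1 ≤ 7 * t := by
    have h2 : (N : ℝ) < 5 * t + 1 := Nat.ceil_lt_add_one (by positivity)
    linarith
  set c : InfinitePlace E → ℝ := fun w => (Cinf w) ^ ((w.mult : ℝ)⁻¹) with hc
  have hcpos : ∀ w, 0 < c w := fun w => Real.rpow_pos_of_pos (hCinf w) _
  have hcpow : ∀ w : InfinitePlace E, c w ^ w.mult = Cinf w := by
    intro w
    rw [hc, ← Real.rpow_natCast ((Cinf w) ^ ((w.mult : ℝ)⁻¹)) w.mult,
      ← Real.rpow_mul (hCinf w).le,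
      inv_mul_cancel₀ (by exact_mod_cast (hmultpos w).ne'), Real.rpow_one]
  have hbound : ∀ x ∈ S, ∀ w : InfinitePlace E, w x ≤ c w := by
    intro x hx w
    have h1 : w x ^ w.mult ≤ c w ^ w.mult := by rw [hcpow w]; exact hx.1 w
    exact le_of_pow_le_pow_left₀ (hmultpos w).ne' (hcpos w).le h1
  -- the index (cell) map
  set idx : E → InfinitePlace E → ℤ × ℤ := fun x w =>
    (⌊((w.embedding x).re / c w + 1) * N / 2⌋,
      if w.IsReal then 0 else ⌊((w.embedding x).im / c w + 1) * N / 2⌋) with hidx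
  -- same cell in one coordinate gives closeness
  have hfloor : ∀ (u u' cw : ℝ), 0 < cw →
      ⌊(u / cw + 1) * N / 2⌋ = ⌊(u' / cw + 1) * N / 2⌋ → |u - u'| ≤ 2 * cw / N := by
    intro u u' cw hcw hfl
    have h1 := Int.abs_sub_lt_one_of_floor_eq_floor hfl
    have heq : (u / cw + 1) * N / 2 - (u' / cw + 1) * N / 2 = (u - u') * N / (2 * cw) := by
      field_simp
      ring
    rw [heq, abs_div, abs_mul, abs_of_pos (by positivity : (0:ℝ) < 2 * cw),
      div_lt_one (by positivity), abs_of_pos hNpos] at h1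
    rw [le_div_iff₀ hNpos]
    linarith
  -- injectivity on S
  have hinj : Set.InjOn idx S := by
    intro x hx y hy hxy
    by_contra hne
    have hz : x - y ≠ 0 := sub_ne_zero_of_ne hne
    have keyw : ∀ w : InfinitePlace E, w (x - y) ≤ 4 * c w / N := by
      intro w
      have hre : |(w.embedding x).re - (w.embedding y).re| ≤ 2 * c w / N :=
        hfloor _ _ _ (hcpos w) (congrArg Prod.fst (congrFun hxy w))
      have him : |(w.embedding x).im - (w.embedding y).im| ≤ 2 * c w / N := by
        by_cases hw : w.IsReal
        · have hx0 : (w.embedding x).im = 0 := by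
            rw [← NumberField.InfinitePlace.embedding_of_isReal_apply hw x, Complex.ofReal_im]
          have hy0 : (w.embedding y).im = 0 := by
            rw [← NumberField.InfinitePlace.embedding_of_isReal_apply hw y, Complex.ofReal_im]
          rw [hx0, hy0, sub_zero, abs_zero]
          have := hcpos w
          exact le_of_lt (div_pos (by linarith) hNpos)
        · have hfl : ⌊((w.embedding x).im / c w + 1) * N / 2⌋ =
              ⌊((w.embedding y).im / c w + 1) * N / 2⌋ := by
            have h2 := congrArg Prod.snd (congrFun hxy w)
            simpa [hidx, if_neg hw] using h2
          exact hfloor _ _ _ (hcpos w) hfl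
      have hz2 : w (x - y) ≤ |(w.embedding (x - y)).re| + |(w.embedding (x - y)).im| := by
        rw [← NumberField.InfinitePlace.norm_embedding_eq]
        exact Complex.norm_le_abs_re_add_abs_im _
      have hsub : w.embedding (x - y) = w.embedding x - w.embedding y := map_sub _ _ _
      rw [hsub] at hz2
      have : w (x - y) ≤ 2 * c w / N + 2 * c w / N := by
        refine le_trans hz2 (add_le_add ?_ ?_)
        · simpa [Complex.sub_re] using hre
        · simpa [Complex.sub_im] using him
      have h4 : 2 * c w / (N:ℝ) + 2 * c w / N = 4 * c w / N := by ring
      linarith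
    -- product of archimedean bounds
    have hprod1 : (∏ w : InfinitePlace E, w (x - y) ^ w.mult) ≤
        (4 / N) ^ n * ∏ w : InfinitePlace E, Cinf w := by
      have step1 : (∏ w : InfinitePlace E, w (x - y) ^ w.mult) ≤
          ∏ w : InfinitePlace E, (4 * c w / N) ^ w.mult := by
        refine Finset.prod_le_prod (fun w _ => pow_nonneg (AbsoluteValue.nonneg _ _) _)
          (fun w _ => pow_le_pow_left₀ (AbsoluteValue.nonneg _ _) (keyw w) _)
      refine le_trans step1 (le_of_eq ?_)
      have step2 : ∀ w : InfinitePlace E, (4 * c w / N) ^ w.mult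
          = (4 / N) ^ w.mult * Cinf w := by
        intro w
        rw [← hcpow w, ← mul_pow]
        congr 1
        field_simp
      rw [Finset.prod_congr rfl fun w _ => step2 w, Finset.prod_mul_distrib,
        Finset.prod_pow_eq_pow_sum]
    -- product of finite bounds
    have hprod2 : (∏ᶠ v, finNorm v (x - y)) ≤ ∏ᶠ v, Cfin v := by
      set u : Finset (HeightOneSpectrum (RingOfIntegers E)) :=
        (mulSupport_finNorm hz).toFinset ∪ hfinite.toFinset with hu
      have e1 : (∏ᶠ v, finNorm v (x - y)) = ∏ v ∈ u, finNorm v (x - y) := by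
        refine finprod_eq_prod_of_mulSupport_subset _ ?_
        intro v hv
        simp only [hu, Finset.coe_union, Set.mem_union, Finset.mem_coe,
          Set.Finite.coe_toFinset]
        exact Or.inl hv
      have e2 : (∏ᶠ v, Cfin v) = ∏ v ∈ u, Cfin v := by
        refine finprod_eq_prod_of_mulSupport_subset _ ?_
        intro v hv
        simp only [hu, Finset.coe_union, Set.mem_union, Finset.mem_coe,
          Set.Finite.coe_toFinset]
        exact Or.inr hv
      rw [e1, e2]
      refine Finset.prod_le_prod (fun v _ => ?_) (fun v _ => ?_)
      · rcases eq_or_ne (x - y) 0 with h0 | h0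
        · exact absurd h0 hz
        · exact (finNorm_pos v h0).le
      · exact finNorm_sub_le v (hCfin v).le (hx.2 v) (hy.2 v)
    have hpf := prod_formula hz
    have hA : 0 < ∏ w : InfinitePlace E, w (x - y) ^ w.mult :=
      Finset.prod_pos fun w _ => pow_pos (NumberField.InfinitePlace.pos_iff.mpr hz) _
    have hB : 0 < ∏ᶠ v, finNorm v (x - y) := by nlinarith [hpf]
    have hge : (1:ℝ) ≤ ((4 / N) ^ n * ∏ w : InfinitePlace E, Cinf w) * ∏ᶠ v, Cfin v := by
      rw [← hpf]
      exact mul_le_mul hprod1 hprod2 hB.le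
        (mul_nonneg (pow_nonneg (by positivity) n) hP.le)
    have hlt : ((4 / N) ^ n * ∏ w : InfinitePlace E, Cinf w) * ∏ᶠ v, Cfin v < 1 := by
      have h45 : (4:ℝ) / N ≤ 4 / (5 * t) :=
        div_le_div_of_nonneg_left (by norm_num) (by linarith) hN5t
      have hVle : V ≤ t ^ n := by rw [htn]; exact le_max_left _ _
      have hchain : ((4 / N) ^ n * ∏ w : InfinitePlace E, Cinf w) * ∏ᶠ v, Cfin v
          = (4 / N) ^ n * V := by rw [hV]; ring
      rw [hchain]
      have h1 : (4 / (N:ℝ)) ^ n * V ≤ (4 / (5 * t)) ^ n * t ^ n := by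
        refine mul_le_mul (pow_le_pow_left₀ (by positivity) h45 n) hVle hVpos.le
          (pow_nonneg (div_nonneg (by norm_num) (by linarith)) n)
      have h2 : (4 / (5 * t)) ^ n * t ^ n = (4 / 5 : ℝ) ^ n := by
        rw [← mul_pow]
        congr 1
        field_simp
      have h3 : (4 / 5 : ℝ) ^ n < 1 := pow_lt_one₀ (by norm_num) (by norm_num) hnpos.ne'
      calc (4 / (N:ℝ)) ^ n * V ≤ (4 / (5 * t)) ^ n * t ^ n := h1
        _ = (4 / 5 : ℝ) ^ n := h2
        _ < 1 := h3
    linarith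
  -- the target finset of cells
  set T : Finset (InfinitePlace E → ℤ × ℤ) := Fintype.piFinset fun w =>
    (Finset.Icc (0:ℤ) N) ×ˢ (if w.IsReal then {0} else Finset.Icc (0:ℤ) N) with hT
  have hfloorIcc : ∀ (u cw : ℝ), 0 < cw → |u| ≤ cw →
      ⌊(u / cw + 1) * N / 2⌋ ∈ Finset.Icc (0:ℤ) N := by
    intro u cw hcw hu
    rw [Finset.mem_Icc]
    have h1 : -1 ≤ u / cw := by
      rw [neg_le, ← neg_div, div_le_one hcw]
      have := abs_le.mp hu
      linarith
    have h2 : u / cw ≤ 1 := by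
      rw [div_le_one hcw]
      exact le_trans (le_abs_self u) hu
    constructor
    · apply Int.floor_nonneg.mpr
      have : (0:ℝ) ≤ (u / cw + 1) * N := mul_nonneg (by linarith) hNpos.le
      linarith
    · have : ((u / cw + 1) * N / 2 : ℝ) ≤ (N : ℝ) := by
        have hNn : (0:ℝ) ≤ (N:ℝ) := hNpos.le
        nlinarith
      calc ⌊((u / cw + 1) * N / 2 : ℝ)⌋ ≤ ⌊(N : ℝ)⌋ := Int.floor_mono this
        _ = (N : ℤ) := by exact_mod_cast Int.floor_natCast N
  have himage : idx '' S ⊆ ↑T := by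
    rintro _ ⟨x, hx, rfl⟩
    rw [Finset.mem_coe, hT, Fintype.mem_piFinset]
    intro w
    rw [Finset.mem_product]
    have hre : |(w.embedding x).re| ≤ c w := by
      refine le_trans ?_ (hbound x hx w)
      rw [← NumberField.InfinitePlace.norm_embedding_eq]
      exact Complex.abs_re_le_norm _
    have him : |(w.embedding x).im| ≤ c w := by
      refine le_trans ?_ (hbound x hx w)
      rw [← NumberField.InfinitePlace.norm_embedding_eq]
      exact Complex.abs_im_le_norm _
    constructor
    · exact hfloorIcc _ _ (hcpos w) hre
    · by_cases hw : w.IsReal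
      · simp [hidx, if_pos hw]
      · simp only [hidx, if_neg hw]
        exact hfloorIcc _ _ (hcpos w) him
  have hSfin : S.Finite := Set.Finite.of_finite_image ((T.finite_toSet).subset himage) hinj
  refine ⟨hSfin, ?_⟩
  have hTcard : T.card = (N + 1) ^ n := by
    rw [hT, Fintype.card_piFinset]
    have hIcc : (Finset.Icc (0:ℤ) (N:ℤ)).card = N + 1 := by
      rw [Int.card_Icc]
      omega
    have step : ∀ w : InfinitePlace E,
        ((Finset.Icc (0:ℤ) N) ×ˢ (if w.IsReal then {0} else Finset.Icc (0:ℤ) N)).card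
        = (N + 1) ^ w.mult := by
      intro w
      rw [Finset.card_product, hIcc, NumberField.InfinitePlace.mult]
      by_cases hw : w.IsReal
      · rw [if_pos hw, if_pos hw, Finset.card_singleton, mul_one, pow_one]
      · rw [if_neg hw, if_neg hw, hIcc, sq]
    rw [Finset.prod_congr rfl fun w _ => step w, Finset.prod_pow_eq_pow_sum]
  have hcard : (Nat.card S : ℝ) ≤ (T.card : ℝ) := by
    have h1 : Nat.card S ≤ T.card := by
      rw [Nat.card_coe_set_eq]
      calc S.ncard = (idx '' S).ncard := (Set.ncard_image_of_injOn hinj).symm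
        _ ≤ (↑T : Set (InfinitePlace E → ℤ × ℤ)).ncard :=
          Set.ncard_le_ncard himage T.finite_toSet
        _ = T.card := Set.ncard_coe_finset T
    exact_mod_cast h1
  have hmax : max V 1 ≤ 1 + V := by
    apply max_le <;> linarith
  calc (Nat.card S : ℝ) ≤ (T.card : ℝ) := hcard
    _ = ((N:ℝ) + 1) ^ n := by rw [hTcard]; push_cast; ring
    _ ≤ (7 * t) ^ n := pow_le_pow_left₀ (by positivity) hN1 n
    _ = 7 ^ n * t ^ n := mul_pow _ _ _
    _ = 7 ^ n * max V 1 := by rw [htn]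
    _ ≤ 7 ^ n * (1 + V) := by
        exact mul_le_mul_of_nonneg_left hmax (by positivity)
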